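/- Let a, α ∈ ℕ, let x_0 = Σ_{i=1}^k 2^{-m_i} with α ≤ m_1 < ... < m_k, 1 ≤ k ≤ a, and let β > m_k. Define Y = { Σ_{i=1}^{k+l} 2^{-m_i} : 0 ≤ l ≤ a-k, β ≤ m_{k+1} < ... < m_{k+l} }. Then Y is an open subset of X_{a,α} in the subspace topology inherited from ℝ. -/
import Mathlib

lemma two_zpow_pos (n : ℤ) : (0:ℝ) < 2 ^ n := zpow_pos (by norm_num) n

lemma two_zpow_mono {m n : ℤ} (h : m ≤ n) : (2:ℝ) ^ m ≤ 2 ^ n :=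
  zpow_le_zpow_right₀ (by norm_num) h

lemma two_zpow_add (m n : ℤ) : (2:ℝ) ^ (m + n) = 2 ^ m * 2 ^ n :=
  zpow_add₀ (by norm_num) m n

lemma two_zpow_succ (K : ℕ) : (2:ℝ) ^ (-(K:ℤ)) = 2 * 2 ^ (-((K:ℤ)+1)) := by
  have : -(K:ℤ) = 1 + (-((K:ℤ)+1)) := by ring
  rw [this, two_zpow_add]; norm_num

lemma geom_Ioc (m K : ℕ) (h : m ≤ K) :
    ∑ j ∈ Finset.Ioc m K, (2:ℝ) ^ (-(j:ℤ)) = 2 ^ (-(m:ℤ)) - 2 ^ (-(K:ℤ)) := by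
  induction K, h using Nat.le_induction with
  | base => simp
  | succ K hK ih =>
    rw [Finset.sum_Ioc_succ_top hK, ih]
    have := two_zpow_succ K
    push_cast
    push_cast at this
    linarith

lemma sum_le_geom_Ioc (f : Finset ℕ) (m K : ℕ) (hmK : m ≤ K)
    (h : ∀ j ∈ f, m < j ∧ j ≤ K) :
    ∑ j ∈ f, (2:ℝ) ^ (-(j:ℤ)) ≤ 2 ^ (-(m:ℤ)) - 2 ^ (-(K:ℤ)) := by
  rw [← geom_Ioc m K hmK]
  refine Finset.sum_le_sum_of_subset_of_nonneg ?_ (fun i _ _ => (two_zpow_pos _).le)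
  intro j hj
  simp only [Finset.mem_Ioc]
  exact h j hj

lemma sum_le_tail : ∀ (c : ℕ) (f : Finset ℕ) (n : ℕ), f.card = c →
    (∀ j ∈ f, n < j) →
    ∑ j ∈ f, (2:ℝ) ^ (-(j:ℤ)) ≤ 2 ^ (-(n:ℤ)) - 2 ^ (-(n:ℤ) - c) := by
  intro c
  induction c with
  | zero =>
    intro f n hc _
    rw [Finset.card_eq_zero.mp hc]
    simp
  | succ c ih =>
    intro f n hc hn
    have hne : f.Nonempty := Finset.card_pos.mp (by omega)
    set m₀ := f.min' hne with hm₀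
    have hm₀f : m₀ ∈ f := f.min'_mem hne
    have hnm₀ : n < m₀ := hn _ hm₀f
    have hcard' : (f.erase m₀).card = c := by
      rw [Finset.card_erase_of_mem hm₀f, hc]; omega
    have h' : ∀ j ∈ f.erase m₀, m₀ < j := by
      intro j hj
      have := f.min'_le j (Finset.mem_of_mem_erase hj)
      have := Finset.ne_of_mem_erase hj
      omega
    have ihe := ih (f.erase m₀) m₀ hcard' h'
    rw [← Finset.add_sum_erase _ _ hm₀f]
    have key : (2:ℝ) ^ (-(m₀:ℤ)) + (2 ^ (-(m₀:ℤ)) - 2 ^ (-(m₀:ℤ) - c)) ≤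
        2 ^ (-(n:ℤ)) - 2 ^ (-(n:ℤ) - (c+1:ℕ)) := by
      have h1 : (2:ℝ) ^ (-(m₀:ℤ)) ≤ 2 ^ (-(n:ℤ) - 1) := two_zpow_mono (by omega)
      have h2 : (2:ℝ) ^ (-(m₀:ℤ) - c) ≥ 0 := (two_zpow_pos _).le
      -- 2*2^{-m₀} - 2^{-m₀-c} = 2^{-m₀}(2 - 2^{-c}) ≤ 2^{-n-1}(2-2^{-c}) = 2^{-n} - 2^{-n-c-1}
      have e1 : (2:ℝ) ^ (-(m₀:ℤ) - c) = 2 ^ (-(m₀:ℤ)) * 2 ^ (-(c:ℤ)) := by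
        rw [← two_zpow_add]; ring_nf
      have e2 : (2:ℝ) ^ (-(n:ℤ) - (c+1:ℕ)) = 2 ^ (-(n:ℤ) - 1) * 2 ^ (-(c:ℤ)) := by
        rw [← two_zpow_add]; push_cast; ring_nf
      have e3 : (2:ℝ) ^ (-(n:ℤ)) = 2 * 2 ^ (-(n:ℤ) - 1) := by
        have : -(n:ℤ) = 1 + (-(n:ℤ) - 1) := by ring
        rw [this, two_zpow_add]; norm_num
      have hc2 : (2:ℝ) ^ (-(c:ℤ)) ≤ 2 := le_trans (two_zpow_mono (by omega : -(c:ℤ) ≤ 1)) (by norm_num)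
      have hc0 : (0:ℝ) < 2 ^ (-(c:ℤ)) := two_zpow_pos _
      rw [e1, e2, e3]
      nlinarith [two_zpow_pos (-(m₀:ℤ))]
    linarith

lemma sum_le_tail' (f : Finset ℕ) (n a : ℕ) (hc : f.card ≤ a) (hn : ∀ j ∈ f, n < j) :
    ∑ j ∈ f, (2:ℝ) ^ (-(j:ℤ)) ≤ 2 ^ (-(n:ℤ)) - 2 ^ (-(n:ℤ) - a) := by
  have := sum_le_tail f.card f n rfl hn
  have := two_zpow_mono (by omega : -(n:ℤ) - a ≤ -(n:ℤ) - f.card)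
  linarith

lemma two_zpow_lt {m n : ℤ} (h : m < n) : (2:ℝ) ^ m < 2 ^ n :=
  zpow_lt_zpow_right₀ (by norm_num) h



/-- The set `X_{a,α} = {0} ∪ { ∑_{i=1}^k 2^{-m_i} : 1 ≤ k ≤ a, α ≤ m_1 < ⋯ < m_k }`. -/
def dyadicSet (a α : ℕ) : Set ℝ :=
  {0} ∪ {x | ∃ s : Finset ℕ, s.Nonempty ∧ s.card ≤ a ∧ (∀ m ∈ s, α ≤ m) ∧
    x = ∑ m ∈ s, (2 : ℝ) ^ (-(m : ℤ))}

/-- With `x₀ = ∑_{m ∈ s} 2^{-m}` (where `α ≤ m` for `m ∈ s`, `1 ≤ s.card ≤ a`) and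
`β > max s`, the set `Y` of all sums `x₀ + ∑_{m ∈ t} 2^{-m}` with `t.card ≤ a - s.card` and
all elements of `t` at least `β` is open in the subspace topology of `X_{a,α}`. -/
theorem dyadicSet_Y_isOpen (a α β : ℕ) (s : Finset ℕ) (hs : s.Nonempty)
    (hcard : s.card ≤ a) (hα : ∀ m ∈ s, α ≤ m) (hβ : s.max' hs < β) :
    ∃ U : Set ℝ, IsOpen U ∧
      U ∩ dyadicSet a α =
        {x | ∃ t : Finset ℕ, t.card ≤ a - s.card ∧ (∀ m ∈ t, β ≤ m) ∧
          x = (∑ m ∈ s, (2 : ℝ) ^ (-(m : ℤ))) + ∑ m ∈ t, (2 : ℝ) ^ (-(m : ℤ))} := by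
  classical
  set M := s.max' hs with hM
  set x₀ := ∑ m ∈ s, (2:ℝ) ^ (-(m:ℤ)) with hx₀
  have hscard1 : 1 ≤ s.card := Finset.card_pos.mpr hs
  have ha1 : 1 ≤ a := le_trans hscard1 hcard
  have hMs : M ∈ s := s.max'_mem hs
  have hβ1 : 1 ≤ β := by omega
  have hx₀M : (2:ℝ) ^ (-(M:ℤ)) ≤ x₀ :=
    Finset.single_le_sum (f := fun m : ℕ => (2:ℝ) ^ (-(m:ℤ))) (fun i _ => (two_zpow_pos _).le) hMs
  refine ⟨Set.Ioo (x₀ - 2 ^ (-(M:ℤ) - a)) (x₀ + 2 ^ (1 - (β:ℤ))), isOpen_Ioo, ?_⟩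
  ext x
  simp only [Set.mem_inter_iff, Set.mem_Ioo, Set.mem_setOf_eq, dyadicSet, Set.mem_union,
    Set.mem_singleton_iff]
  constructor
  · rintro ⟨⟨hlo, hhi⟩, hX⟩
    rcases hX with h0 | ⟨r, hrne, hrcard, hrα, hxr⟩
    · exfalso
      subst h0
      have h1 : (2:ℝ) ^ (-(M:ℤ) - a) < 2 ^ (-(M:ℤ)) := two_zpow_lt (by omega)
      linarith
    · subst hxr
      by_cases hsr : s = r
      · exact ⟨∅, by simp, by simp, by rw [← hsr, Finset.sum_empty, add_zero]⟩
      · set d := (s \ r) ∪ (r \ s) with hd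
        have hdne : d.Nonempty := by
          rw [Finset.nonempty_iff_ne_empty]
          intro h
          rcases Finset.union_eq_empty.mp h with ⟨h1, h2⟩
          exact hsr (Finset.Subset.antisymm
            (Finset.sdiff_eq_empty_iff_subset.mp h1)
            (Finset.sdiff_eq_empty_iff_subset.mp h2))
        set m := d.min' hdne with hm
        have hmd : m ∈ d := d.min'_mem hdne
        have hmin : ∀ j ∈ d, m ≤ j := fun j hj => d.min'_le j hj
        have hsplit_s : x₀ = (∑ j ∈ s.filter (· < m), (2:ℝ) ^ (-(j:ℤ))) +
            ∑ j ∈ s.filter (fun j => ¬ j < m), (2:ℝ) ^ (-(j:ℤ)) :=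
          (Finset.sum_filter_add_sum_filter_not s (· < m) _).symm
        have hsplit_r : (∑ j ∈ r, (2:ℝ) ^ (-(j:ℤ))) =
            (∑ j ∈ r.filter (· < m), (2:ℝ) ^ (-(j:ℤ))) +
            ∑ j ∈ r.filter (fun j => ¬ j < m), (2:ℝ) ^ (-(j:ℤ)) :=
          (Finset.sum_filter_add_sum_filter_not r (· < m) _).symm
        have hpre : s.filter (· < m) = r.filter (· < m) := by
          ext j
          simp only [Finset.mem_filter]
          constructor
          · rintro ⟨hjs, hjm⟩
            refine ⟨?_, hjm⟩
            by_contra hjr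
            have : j ∈ d := Finset.mem_union_left _ (Finset.mem_sdiff.mpr ⟨hjs, hjr⟩)
            have := hmin j this
            omega
          · rintro ⟨hjr, hjm⟩
            refine ⟨?_, hjm⟩
            by_contra hjs
            have : j ∈ d := Finset.mem_union_right _ (Finset.mem_sdiff.mpr ⟨hjr, hjs⟩)
            have := hmin j this
            omega
        rcases Finset.mem_union.mp hmd with hms | hmr
        · exfalso
          obtain ⟨hms', hmr'⟩ := Finset.mem_sdiff.mp hms
          have h1 : (2:ℝ) ^ (-(m:ℤ)) ≤ ∑ j ∈ s.filter (fun j => ¬ j < m), (2:ℝ) ^ (-(j:ℤ)) :=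
            Finset.single_le_sum (f := fun m : ℕ => (2:ℝ) ^ (-(m:ℤ))) (fun i _ => (two_zpow_pos _).le)
              (Finset.mem_filter.mpr ⟨hms', by simp⟩)
          have h2 : (∑ j ∈ r.filter (fun j => ¬ j < m), (2:ℝ) ^ (-(j:ℤ))) ≤
              2 ^ (-(m:ℤ)) - 2 ^ (-(m:ℤ) - a) := by
            refine sum_le_tail' _ m a (le_trans (Finset.card_filter_le _ _) hrcard) ?_
            intro j hj
            obtain ⟨hjr, hjm⟩ := Finset.mem_filter.mp hj
            have : j ≠ m := fun h => hmr' (h ▸ hjr)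
            omega
          have hmM : m ≤ M := s.le_max' m hms'
          have h3 : (2:ℝ) ^ (-(M:ℤ) - a) ≤ 2 ^ (-(m:ℤ) - a) := two_zpow_mono (by omega)
          rw [hpre] at hsplit_s
          linarith
        · obtain ⟨hmr', hms'⟩ := Finset.mem_sdiff.mp hmr
          have hmβ : β ≤ m := by
            by_contra hmb
            push_neg at hmb
            have h1 : (2:ℝ) ^ (-(m:ℤ)) ≤ ∑ j ∈ r.filter (fun j => ¬ j < m), (2:ℝ) ^ (-(j:ℤ)) :=
              Finset.single_le_sum (f := fun m : ℕ => (2:ℝ) ^ (-(m:ℤ))) (fun i _ => (two_zpow_pos _).le)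
                (Finset.mem_filter.mpr ⟨hmr', by simp⟩)
            have h2 : (∑ j ∈ s.filter (fun j => ¬ j < m), (2:ℝ) ^ (-(j:ℤ))) ≤
                2 ^ (-(m:ℤ)) - 2 ^ (-((max M m : ℕ):ℤ)) := by
              refine sum_le_geom_Ioc _ m (max M m) (le_max_right _ _) ?_
              intro j hj
              obtain ⟨hjs, hjm⟩ := Finset.mem_filter.mp hj
              have hne : j ≠ m := fun h => hms' (h ▸ hjs)
              have hjM : j ≤ M := s.le_max' j hjs
              omega
            have h3 : (2:ℝ) ^ (1 - (β:ℤ)) ≤ 2 ^ (-((max M m : ℕ):ℤ)) := by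
              refine two_zpow_mono ?_
              have : (max M m : ℕ) ≤ β - 1 := by omega
              push_cast
              omega
            rw [hpre] at hsplit_s
            linarith
          have hsub : s ⊆ r := by
            intro j hj
            by_contra hjr
            have : j ∈ d := Finset.mem_union_left _ (Finset.mem_sdiff.mpr ⟨hj, hjr⟩)
            have := hmin j this
            have := s.le_max' j hj
            omega
          refine ⟨r \ s, ?_, ?_, ?_⟩
          · have h1 : (r \ s).card = r.card - s.card := Finset.card_sdiff_of_subset hsub
            have h2 : s.card ≤ r.card := Finset.card_le_card hsub
            omega
          · intro j hj
            have := hmin j (Finset.mem_union_right _ hj)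
            omega
          · rw [← Finset.sum_sdiff hsub]
            ring
  · rintro ⟨t, htcard, htβ, hxt⟩
    subst hxt
    have htpos : (0:ℝ) ≤ ∑ j ∈ t, (2:ℝ) ^ (-(j:ℤ)) :=
      Finset.sum_nonneg fun i _ => (two_zpow_pos _).le
    have htlt : (∑ j ∈ t, (2:ℝ) ^ (-(j:ℤ))) < 2 ^ (1 - (β:ℤ)) := by
      have h1 : (∑ j ∈ t, (2:ℝ) ^ (-(j:ℤ))) ≤
          2 ^ (-((β-1:ℕ):ℤ)) - 2 ^ (-((β-1:ℕ):ℤ) - a) := by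
        refine sum_le_tail' t (β-1) a (by omega) ?_
        intro j hj
        have := htβ j hj
        omega
      have h2 : (-((β-1:ℕ):ℤ)) = 1 - (β:ℤ) := by push_cast [Nat.cast_sub hβ1]; ring
      rw [h2] at h1
      have := two_zpow_pos (1 - (β:ℤ) - a)
      linarith
    have hdisj : Disjoint s t := by
      rw [Finset.disjoint_left]
      intro j hjs hjt
      have := s.le_max' j hjs
      have := htβ j hjt
      omega
    refine ⟨⟨?_, ?_⟩, ?_⟩
    · have := two_zpow_pos (-(M:ℤ) - a)
      linarith
    · linarith
    · right
      refine ⟨s ∪ t, hs.mono Finset.subset_union_left, ?_, ?_, ?_⟩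
      · rw [Finset.card_union_of_disjoint hdisj]
        omega
      · intro j hj
        rcases Finset.mem_union.mp hj with h | h
        · exact hα j h
        · have := hα M hMs
          have := htβ j h
          omega
      · rw [Finset.sum_union hdisj]
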